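/- Let Z be a C-Bourgain-Delbaen-ℒ∞ sum of Banach spaces (X_n), with projections P_n = i_n r_n|_Z on Z and projections Q_n on Y = (⊕_n X_n)₀, and let L_n, R_n be the standard finite-Fredholm-equivalence operators. Then for every n, the operator P_n − L_n R_n : Z → Z is of finite rank, since it factors through the finite-dimensional space ℓ∞(Δ_1) ⊕ ⋯ ⊕ ℓ∞(Δ_n); moreover R_n L_n = Q_n exactly. -/
import Mathlib


open Filter Topology ENNReal

set_option maxHeartbeats 2000000 in
/-- Let `Z` be a `C`-Bourgain-Delbaen-`ℒ∞` sum of Banach spaces `(X n)`, with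
projections `P n = i n ∘ ρ n |_Z` on `Z` and coordinate projections `Q n` on
`Y = (⊕_n X_n)₀`, and let `L n`, `R n` be the standard finite-Fredholm-equivalence
operators.  Then for every `n` the operator `P n − R n ∘ L n : Z → Z` is of finite rank
(it factors through the finite-dimensional space `ℓ∞(Δ_1) ⊕ ⋯ ⊕ ℓ∞(Δ_n)`); moreover
`L n ∘ R n = Q n` exactly. -/
theorem stmt13 (X : ℕ → Type*) [∀ n, NormedAddCommGroup (X n)] [∀ n, NormedSpace ℂ (X n)]
    [∀ n, CompleteSpace (X n)]
    (Δ : ℕ → Type*) [∀ n, Fintype (Δ n)]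
    (C : ℝ) (hC : 1 ≤ C)
    (ρ : ℕ → lp (fun n => X n × (Δ n → ℂ)) ∞ →L[ℂ] lp (fun n => X n × (Δ n → ℂ)) ∞)
    (hρ : ∀ n (w : lp (fun n => X n × (Δ n → ℂ)) ∞) k,
      (ρ n w) k = if k ≤ n then w k else 0)
    (i : ℕ → lp (fun n => X n × (Δ n → ℂ)) ∞ →L[ℂ] lp (fun n => X n × (Δ n → ℂ)) ∞)
    (hiC : ∀ n, ‖i n‖ ≤ C)
    (hloc : ∀ n, (i n).comp (ρ n) = i n)
    (hright : ∀ n w, ρ n (i n w) = ρ n w)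
    (hγ : ∀ m n, m ≤ n → (i n).comp ((ρ n).comp (i m)) = i m)
    (hδ : ∀ m n, m < n → ∀ w, ((i m w) n).1 = 0)
    -- `Z`, as a closed subspace of `W`
    (Z : Submodule ℂ (lp (fun n => X n × (Δ n → ℂ)) ∞))
    (hZ : Z = (Submodule.span ℂ
        (⋃ n, i n '' {w | ∀ k, k ≠ n → w k = 0})).topologicalClosure)
    -- `Y = (⊕_n X_n)₀`, the c₀-sum, as the closed subspace of `(⊕_n X_n)_∞` generated by
    -- the finitely supported elements
    (Y : Submodule ℂ (lp (fun n => X n) ∞))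
    (hY : Y = (Submodule.span ℂ
        {f : lp (fun n => X n) ∞ | {n | f n ≠ 0}.Finite}).topologicalClosure)
    -- the projections of the two Schauder decompositions
    (P : ℕ → Z →L[ℂ] Z) (Q : ℕ → Y →L[ℂ] Y)
    (hP : ∀ n (z : Z), ((P n z : lp (fun n => X n × (Δ n → ℂ)) ∞)) = i n (ρ n (z : lp (fun n => X n × (Δ n → ℂ)) ∞)))
    (hQ : ∀ n (y : Y) k, ((Q n y : lp (fun n => X n) ∞)) k = if k ≤ n then (y : lp (fun n => X n) ∞) k else 0)
    -- the operators L_n and R_n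
    (L : ℕ → Z →L[ℂ] Y) (R : ℕ → Y →L[ℂ] Z)
    (hL : ∀ n (z : Z) k, ((L n z : lp (fun n => X n) ∞)) k =
      if k ≤ n then ((z : lp (fun n => X n × (Δ n → ℂ)) ∞) k).1 else 0)
    (hR : ∀ n (y : Y) (w : lp (fun n => X n × (Δ n → ℂ)) ∞),
      (∀ k, w k = ((if k ≤ n then (y : lp (fun n => X n) ∞) k else 0), 0)) →
      ((R n y : lp (fun n => X n × (Δ n → ℂ)) ∞)) = i n w) :
    ∀ n, (L n).comp (R n) = Q n ∧
      FiniteDimensional ℂ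
        (LinearMap.range ((P n - (R n).comp (L n) : Z →L[ℂ] Z) : Z →ₗ[ℂ] Z)) := by
  intro n
  -- Abbreviate the ambient spaces.
  -- Construction of the truncated element `w` used for `R`.
  have mkW : ∀ (g : ∀ k, X k) (M : ℝ), (∀ k, ‖g k‖ ≤ M) →
      ∃ w : lp (fun n => X n × (Δ n → ℂ)) ∞,
        ∀ k, w k = ((if k ≤ n then g k else 0 : X k), (0 : Δ k → ℂ)) := by
    intro g M hM
    have hmem : Memℓp (fun k => ((if k ≤ n then g k else 0 : X k), (0 : Δ k → ℂ))) ∞ := by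
      apply memℓp_infty
      refine ⟨max M 0, ?_⟩
      rintro _ ⟨k, rfl⟩
      simp only [Prod.norm_def, norm_zero]
      by_cases hk : k ≤ n
      · simp only [if_pos hk]
        exact max_le_max (hM k) le_rfl
      · simp [if_neg hk]
    exact ⟨⟨_, hmem⟩, fun k => rfl⟩
  constructor
  · -- `L n ∘ R n = Q n`
    apply ContinuousLinearMap.ext
    intro y
    obtain ⟨w, hw⟩ := mkW (fun k => (y : lp (fun n => X n) ∞) k) ‖(y : lp (fun n => X n) ∞)‖
      (fun k => lp.norm_apply_le_norm ENNReal.top_ne_zero _ k)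
    have hRy : ((R n y : lp (fun n => X n × (Δ n → ℂ)) ∞)) = i n w := hR n y w hw
    have hiw : ∀ k, k ≤ n → (i n w) k = w k := by
      intro k hk
      have h := congrArg (fun v : lp (fun n => X n × (Δ n → ℂ)) ∞ => v k) (hright n w)
      simpa only [hρ, if_pos hk] using h
    apply Subtype.ext
    apply lp.ext
    funext k
    have hLRy := hL n (R n y) k
    rw [ContinuousLinearMap.comp_apply, hLRy, hQ]
    by_cases hk : k ≤ n
    · rw [if_pos hk, if_pos hk, hRy, hiw k hk, hw k]
      simp [if_pos hk]
    · rw [if_neg hk, if_neg hk]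
  · -- finite rank of `P n - R n ∘ L n`
    set T : Z →L[ℂ] Z := P n - (R n).comp (L n) with hT
    -- The finite-dimensional subspace `V` of `W`.
    let V : Submodule ℂ (lp (fun n => X n × (Δ n → ℂ)) ∞) :=
      { carrier := {v | (∀ k, (v k).1 = 0) ∧ ∀ k, n < k → v k = 0}
        add_mem' := by
          rintro a b ⟨ha1, ha2⟩ ⟨hb1, hb2⟩
          refine ⟨fun k => ?_, fun k hk => ?_⟩
          · have : (a + b) k = a k + b k := by rw [lp.coeFn_add]; rfl
            rw [this, Prod.fst_add, ha1 k, hb1 k, add_zero]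
          · have : (a + b) k = a k + b k := by rw [lp.coeFn_add]; rfl
            rw [this, ha2 k hk, hb2 k hk, add_zero]
        zero_mem' := by
          refine ⟨fun k => ?_, fun k _ => ?_⟩
          · have : (0 : lp (fun n => X n × (Δ n → ℂ)) ∞) k = 0 := by rw [lp.coeFn_zero]; rfl
            rw [this]; rfl
          · rw [lp.coeFn_zero]; rfl
        smul_mem' := by
          rintro c a ⟨ha1, ha2⟩
          refine ⟨fun k => ?_, fun k hk => ?_⟩
          · have : (c • a) k = c • a k := by rw [lp.coeFn_smul]; rfl
            rw [this, Prod.smul_fst, ha1 k, smul_zero]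
          · have : (c • a) k = c • a k := by rw [lp.coeFn_smul]; rfl
            rw [this, ha2 k hk, smul_zero] }
    -- `V` is finite-dimensional: it injects into `Π k : Fin (n+1), (Δ k → ℂ)`.
    let φ : V →ₗ[ℂ] (∀ k : Fin (n + 1), Δ (k : ℕ) → ℂ) :=
      { toFun := fun v => fun k => ((v : lp (fun n => X n × (Δ n → ℂ)) ∞) (k : ℕ)).2
        map_add' := by
          intro a b
          funext k
          have : ((a + b : V) : lp (fun n => X n × (Δ n → ℂ)) ∞) (k : ℕ)
              = (a : lp (fun n => X n × (Δ n → ℂ)) ∞) (k : ℕ)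
                + (b : lp (fun n => X n × (Δ n → ℂ)) ∞) (k : ℕ) := by
            rw [Submodule.coe_add, lp.coeFn_add]; rfl
          simp [this]
        map_smul' := by
          intro c a
          funext k
          have : ((c • a : V) : lp (fun n => X n × (Δ n → ℂ)) ∞) (k : ℕ)
              = c • (a : lp (fun n => X n × (Δ n → ℂ)) ∞) (k : ℕ) := by
            rw [Submodule.coe_smul, lp.coeFn_smul]; rfl
          simp [this] }
    have hφinj : Function.Injective φ := by
      intro a b hab
      apply Subtype.ext
      apply lp.ext
      funext k
      by_cases hk : k ≤ n
      · have h2 := congrFun hab (⟨k, Nat.lt_succ_of_le hk⟩ : Fin (n + 1))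
        have h1a := a.2.1 k
        have h1b := b.2.1 k
        exact Prod.ext (h1a.trans h1b.symm) h2
      · rw [a.2.2 k (Nat.lt_of_not_le hk), b.2.2 k (Nat.lt_of_not_le hk)]
    haveI : FiniteDimensional ℂ V := FiniteDimensional.of_injective φ hφinj
    -- key pointwise identity
    have main : ∀ z : Z, ((T z : lp (fun n => X n × (Δ n → ℂ)) ∞))
        ∈ Submodule.map (i n : lp (fun n => X n × (Δ n → ℂ)) ∞ →ₗ[ℂ] lp (fun n => X n × (Δ n → ℂ)) ∞) V := by
      intro z
      obtain ⟨w, hw⟩ := mkW (fun k => ((z : lp (fun n => X n × (Δ n → ℂ)) ∞) k).1)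
        ‖(z : lp (fun n => X n × (Δ n → ℂ)) ∞)‖
        (fun k => (norm_fst_le _).trans (lp.norm_apply_le_norm ENNReal.top_ne_zero _ k))
      have hw' : ∀ k, w k = ((if k ≤ n then (L n z : lp (fun n => X n) ∞) k else 0), 0) := by
        intro k
        rw [hw k, hL n z k]
        by_cases hk : k ≤ n <;> simp [hk]
      have hRLz : ((R n (L n z) : lp (fun n => X n × (Δ n → ℂ)) ∞)) = i n w := hR n (L n z) w hw'
      have hTz : ((T z : lp (fun n => X n × (Δ n → ℂ)) ∞))
          = i n (ρ n (z : lp (fun n => X n × (Δ n → ℂ)) ∞) - w) := by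
        rw [hT]
        rw [ContinuousLinearMap.sub_apply, ContinuousLinearMap.comp_apply]
        rw [AddSubgroupClass.coe_sub, hP n z, hRLz, map_sub]
      rw [hTz]
      refine ⟨ρ n (z : lp (fun n => X n × (Δ n → ℂ)) ∞) - w, ⟨fun k => ?_, fun k hk => ?_⟩, rfl⟩
      · have : (ρ n (z : lp (fun n => X n × (Δ n → ℂ)) ∞) - w) k
            = ρ n (z : lp (fun n => X n × (Δ n → ℂ)) ∞) k - w k := by
          rw [lp.coeFn_sub]; rfl
        rw [this, hρ, hw k]
        by_cases hk : k ≤ n <;> simp [hk]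
      · have : (ρ n (z : lp (fun n => X n × (Δ n → ℂ)) ∞) - w) k
            = ρ n (z : lp (fun n => X n × (Δ n → ℂ)) ∞) k - w k := by
          rw [lp.coeFn_sub]; rfl
        rw [this, hρ, hw k]
        simp [Nat.not_le.mpr hk]
    have key : Submodule.map Z.subtype (LinearMap.range (T : Z →ₗ[ℂ] Z))
        ≤ Submodule.map (i n : lp (fun n => X n × (Δ n → ℂ)) ∞ →ₗ[ℂ] lp (fun n => X n × (Δ n → ℂ)) ∞) V := by
      rintro _ ⟨_, ⟨z, rfl⟩, rfl⟩
      exact main z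
    haveI : FiniteDimensional ℂ
        (Submodule.map Z.subtype (LinearMap.range (T : Z →ₗ[ℂ] Z))) :=
      Submodule.finiteDimensional_of_le key
    exact (Submodule.equivMapOfInjective Z.subtype Z.injective_subtype _).symm.finiteDimensional
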